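/- Let I, J ⊆ V be disjoint of sizes i and j with max(i,j) ≤ min(k, n−k) (so both legs of p_{I,J} are nonempty). Then the union of all blocks of P_{I,J} = supp(p_{I,J}) equals I ∪ J if i = j = k, and equals V otherwise; and the intersection of all blocks of P_{I,J} equals (I ∪ J)ᶜ if i = j = n−k, and is empty otherwise. -/
import Mathlib

open Finset

/-- When both legs of `p_{I,J}` are nonempty (i.e. `max(i,j) ≤ min(k,n-k)`),
the union of all blocks of `P_{I,J}` is `I ∪ J` if `i = j = k` and `V` otherwise,
and the intersection of all blocks is `(I ∪ J)ᶜ` if `i = j = n-k` and `∅` otherwise. -/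
theorem paired_union_inter {α : Type*} [Fintype α] [DecidableEq α] (n k i j : ℕ)
    (hn : Fintype.card α = n) (hk : k ≤ n)
    (I J : Finset α) (hd : Disjoint I J) (hi : I.card = i) (hj : J.card = j)
    (hlegs : max i j ≤ min k (n - k)) :
    ((Finset.powersetCard k (Finset.univ : Finset α)).filter
        (fun K => (I ⊆ K ∧ K ⊆ Finset.univ \ J) ∨ (J ⊆ K ∧ K ⊆ Finset.univ \ I))).sup id =
      (if i = k ∧ j = k then I ∪ J else Finset.univ) ∧
    ((Finset.powersetCard k (Finset.univ : Finset α)).filter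
        (fun K => (I ⊆ K ∧ K ⊆ Finset.univ \ J) ∨ (J ⊆ K ∧ K ⊆ Finset.univ \ I))).inf id =
      (if i = n - k ∧ j = n - k then Finset.univ \ (I ∪ J) else ∅) := by
  have hik : i ≤ k := le_trans (le_trans (le_max_left i j) hlegs) (min_le_left _ _)
  have hjk : j ≤ k := le_trans (le_trans (le_max_right i j) hlegs) (min_le_left _ _)
  have hink : i ≤ n - k := le_trans (le_trans (le_max_left i j) hlegs) (min_le_right _ _)
  have hjnk : j ≤ n - k := le_trans (le_trans (le_max_right i j) hlegs) (min_le_right _ _)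
  set S := ((Finset.powersetCard k (Finset.univ : Finset α)).filter
      (fun K => (I ⊆ K ∧ K ⊆ Finset.univ \ J) ∨ (J ⊆ K ∧ K ⊆ Finset.univ \ I))) with hS
  have hmemS : ∀ K : Finset α, K ∈ S ↔ K.card = k ∧
      ((I ⊆ K ∧ K ⊆ Finset.univ \ J) ∨ (J ⊆ K ∧ K ⊆ Finset.univ \ I)) := by
    intro K
    simp [hS, Finset.mem_filter, Finset.mem_powersetCard_univ, and_comm]
  have hcardJ : (Finset.univ \ J).card = n - j := by
    rw [Finset.card_sdiff_of_subset (Finset.subset_univ _), Finset.card_univ, hn, hj]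
  have hcardI : (Finset.univ \ I).card = n - i := by
    rw [Finset.card_sdiff_of_subset (Finset.subset_univ _), Finset.card_univ, hn, hi]
  have hIJc : I ⊆ Finset.univ \ J := by
    intro x hx
    simp only [Finset.mem_sdiff, Finset.mem_univ, true_and]
    exact fun hxJ => (Finset.disjoint_left.mp hd hx) hxJ
  have hJIc : J ⊆ Finset.univ \ I := by
    intro x hx
    simp only [Finset.mem_sdiff, Finset.mem_univ, true_and]
    exact Finset.disjoint_right.mp hd hx
  have hknj : k ≤ n - j := by omega
  have hkni : k ≤ n - i := by omega
  -- existence of a block containing I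
  obtain ⟨K₁, hK₁I, hK₁Jc, hK₁card⟩ :=
    Finset.exists_subsuperset_card_eq hIJc (hi ▸ hik) (hcardJ ▸ hknj)
  obtain ⟨K₂, hK₂J, hK₂Ic, hK₂card⟩ :=
    Finset.exists_subsuperset_card_eq hJIc (hj ▸ hjk) (hcardI ▸ hkni)
  have hK₁S : K₁ ∈ S := (hmemS K₁).mpr ⟨hK₁card, Or.inl ⟨hK₁I, hK₁Jc⟩⟩
  have hSne : S.Nonempty := ⟨K₁, hK₁S⟩
  constructor
  · -- sup
    ext x
    rw [Finset.mem_sup]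
    simp only [id]
    by_cases hij : i = k ∧ j = k
    · rw [if_pos hij]
      constructor
      · rintro ⟨K, hK, hxK⟩
        rw [hmemS] at hK
        obtain ⟨hKc, hK⟩ := hK
        rcases hK with ⟨h1, _⟩ | ⟨h1, _⟩
        · have : I = K := Finset.eq_of_subset_of_card_le h1 (by omega)
          exact Finset.mem_union_left _ (this ▸ hxK)
        · have : J = K := Finset.eq_of_subset_of_card_le h1 (by omega)
          exact Finset.mem_union_right _ (this ▸ hxK)
      · intro hx
        rcases Finset.mem_union.mp hx with hx | hx
        · exact ⟨K₁, hK₁S, hK₁I hx⟩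
        · exact ⟨K₂, (hmemS K₂).mpr ⟨hK₂card, Or.inr ⟨hK₂J, hK₂Ic⟩⟩, hK₂J hx⟩
    · rw [if_neg hij]
      simp only [Finset.mem_univ, iff_true]
      by_cases hxI : x ∈ I
      · exact ⟨K₁, hK₁S, hK₁I hxI⟩
      by_cases hxJ : x ∈ J
      · exact ⟨K₂, (hmemS K₂).mpr ⟨hK₂card, Or.inr ⟨hK₂J, hK₂Ic⟩⟩, hK₂J hxJ⟩
      -- x ∉ I ∪ J
      rcases (not_and_or.mp hij) with h | h
      · have hi' : i < k := lt_of_le_of_ne hik h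
        have hsub : insert x I ⊆ Finset.univ \ J := by
          intro y hy
          rcases Finset.mem_insert.mp hy with rfl | hy
          · simp [hxJ]
          · exact hIJc hy
        obtain ⟨K, hKA, hKB, hKc⟩ := Finset.exists_subsuperset_card_eq hsub
          (by rw [Finset.card_insert_of_notMem hxI, hi]; omega) (hcardJ ▸ hknj)
        exact ⟨K, (hmemS K).mpr ⟨hKc, Or.inl ⟨(Finset.subset_insert _ _).trans hKA, hKB⟩⟩,
          hKA (Finset.mem_insert_self _ _)⟩
      · have hj' : j < k := lt_of_le_of_ne hjk h
        have hsub : insert x J ⊆ Finset.univ \ I := by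
          intro y hy
          rcases Finset.mem_insert.mp hy with rfl | hy
          · simp [hxI]
          · exact hJIc hy
        obtain ⟨K, hKA, hKB, hKc⟩ := Finset.exists_subsuperset_card_eq hsub
          (by rw [Finset.card_insert_of_notMem hxJ, hj]; omega) (hcardI ▸ hkni)
        exact ⟨K, (hmemS K).mpr ⟨hKc, Or.inr ⟨(Finset.subset_insert _ _).trans hKA, hKB⟩⟩,
          hKA (Finset.mem_insert_self _ _)⟩
  · -- inf
    have hinf : S.inf id = S.inf' hSne id := (Finset.inf'_eq_inf hSne id).symm
    ext x
    rw [hinf, Finset.mem_inf']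
    simp only [id]
    by_cases hij : i = n - k ∧ j = n - k
    · rw [if_pos hij]
      constructor
      · intro h
        have h1 := h K₁ hK₁S
        have h2 := h K₂ ((hmemS K₂).mpr ⟨hK₂card, Or.inr ⟨hK₂J, hK₂Ic⟩⟩)
        simp only [Finset.mem_sdiff, Finset.mem_univ, true_and, Finset.mem_union, not_or]
        constructor
        · exact fun hxI => (Finset.mem_sdiff.mp (hK₂Ic h2)).2 hxI
        · exact fun hxJ => (Finset.mem_sdiff.mp (hK₁Jc h1)).2 hxJ
      · intro hx K hK
        rw [hmemS] at hK
        obtain ⟨hKc, hK⟩ := hK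
        simp only [Finset.mem_sdiff, Finset.mem_univ, true_and, Finset.mem_union, not_or] at hx
        rcases hK with ⟨_, h2⟩ | ⟨_, h2⟩
        · have : K = Finset.univ \ J :=
            Finset.eq_of_subset_of_card_le h2 (by rw [hcardJ, hKc]; omega)
          rw [this]; simp [hx.2]
        · have : K = Finset.univ \ I :=
            Finset.eq_of_subset_of_card_le h2 (by rw [hcardI, hKc]; omega)
          rw [this]; simp [hx.1]
    · rw [if_neg hij]
      simp only [Finset.notMem_empty, iff_false, not_forall]
      by_cases hxI : x ∈ I
      · exact ⟨K₂, ⟨(hmemS K₂).mpr ⟨hK₂card, Or.inr ⟨hK₂J, hK₂Ic⟩⟩,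
          fun hxK => (Finset.mem_sdiff.mp (hK₂Ic hxK)).2 hxI⟩⟩
      by_cases hxJ : x ∈ J
      · exact ⟨K₁, ⟨hK₁S, fun hxK => (Finset.mem_sdiff.mp (hK₁Jc hxK)).2 hxJ⟩⟩
      rcases (not_and_or.mp hij) with h | h
      · have hi' : i < n - k := lt_of_le_of_ne hink h
        have hsub : J ⊆ Finset.univ \ insert x I := by
          intro y hy
          simp only [Finset.mem_sdiff, Finset.mem_univ, true_and, Finset.mem_insert, not_or]
          exact ⟨fun hyx => hxJ (hyx ▸ hy), fun hyI => (Finset.disjoint_left.mp hd hyI) hy⟩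
        have hcard' : (Finset.univ \ insert x I).card = n - (i + 1) := by
          rw [Finset.card_sdiff_of_subset (Finset.subset_univ _), Finset.card_univ, hn,
            Finset.card_insert_of_notMem hxI, hi]
        obtain ⟨K, hKA, hKB, hKc⟩ := Finset.exists_subsuperset_card_eq hsub
          (hj ▸ hjk) (by rw [hcard']; omega)
        have hKIc : K ⊆ Finset.univ \ I := by
          intro y hy
          have := Finset.mem_sdiff.mp (hKB hy)
          simp only [Finset.mem_insert, not_or] at this
          simp [this.2.2]
        exact ⟨K, ⟨(hmemS K).mpr ⟨hKc, Or.inr ⟨hKA, hKIc⟩⟩,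
          fun hxK => (Finset.mem_sdiff.mp (hKB hxK)).2 (Finset.mem_insert_self _ _)⟩⟩
      · have hj' : j < n - k := lt_of_le_of_ne hjnk h
        have hsub : I ⊆ Finset.univ \ insert x J := by
          intro y hy
          simp only [Finset.mem_sdiff, Finset.mem_univ, true_and, Finset.mem_insert, not_or]
          exact ⟨fun hyx => hxI (hyx ▸ hy), fun hyJ => (Finset.disjoint_left.mp hd hy) hyJ⟩
        have hcard' : (Finset.univ \ insert x J).card = n - (j + 1) := by
          rw [Finset.card_sdiff_of_subset (Finset.subset_univ _), Finset.card_univ, hn,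
            Finset.card_insert_of_notMem hxJ, hj]
        obtain ⟨K, hKA, hKB, hKc⟩ := Finset.exists_subsuperset_card_eq hsub
          (hi ▸ hik) (by rw [hcard']; omega)
        have hKJc : K ⊆ Finset.univ \ J := by
          intro y hy
          have := Finset.mem_sdiff.mp (hKB hy)
          simp only [Finset.mem_insert, not_or] at this
          simp [this.2.2]
        exact ⟨K, ⟨(hmemS K).mpr ⟨hKc, Or.inl ⟨hKA, hKJc⟩⟩,
          fun hxK => (Finset.mem_sdiff.mp (hKB hxK)).2 (Finset.mem_insert_self _ _)⟩⟩
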